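/- Let Q be an associative quasigroup (i.e. a group) and H a Q-graded Hopf quasigroup. Define δ(h,g,f) = ((h_{(1)}g_{(1)})f_{(1)})S_{pqr}(h_{(2)}(g_{(2)}f_{(2)})) for h ∈ H_p, g ∈ H_q, f ∈ H_r. Then δ is an associator: (hg)f = δ(h_{(1)},g_{(1)},f_{(1)})(h_{(2)}(g_{(2)}f_{(2)})), and δ is the unique trilinear family satisfying this identity. -/

import Mathlib

open TensorProduct

universe u v w

/-- A quasigroup: a set with product, identity `e`, and two-sided inverses satisfying
`p⁻¹(pq) = q` and `(qp)p⁻¹ = q`. -/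
structure QuasigroupStruct (Q : Type u) where
  mul : Q → Q → Q
  one : Q
  inv : Q → Q
  mul_one : ∀ p, mul p one = p
  one_mul : ∀ p, mul one p = p
  inv_mul_cancel : ∀ p q, mul (inv p) (mul p q) = q
  mul_inv_cancel : ∀ p q, mul (mul q p) (inv p) = q

namespace QuasigroupStruct

variable {Q : Type u} (G : QuasigroupStruct Q)

lemma inv_mul_self (p : Q) : G.mul (G.inv p) p = G.one := by
  have h := G.inv_mul_cancel p G.one
  rwa [G.mul_one] at h

lemma mul_inv_self (p : Q) : G.mul p (G.inv p) = G.one := by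
  have h := G.mul_inv_cancel p G.one
  rwa [G.one_mul] at h

lemma inv_inv (p : Q) : G.inv (G.inv p) = p := by
  have h := G.inv_mul_cancel (G.inv p) p
  rw [G.inv_mul_self p] at h
  rwa [G.mul_one] at h

lemma mul_inv_cancel_left (p q : Q) : G.mul p (G.mul (G.inv p) q) = q := by
  have h := G.inv_mul_cancel (G.inv p) q
  rwa [G.inv_inv] at h

lemma inv_mul_cancel_right (p q : Q) : G.mul (G.mul q (G.inv p)) p = q := by
  have h := G.mul_inv_cancel (G.inv p) q
  rwa [G.inv_inv] at h

lemma mul_inv_rev (p q : Q) : G.inv (G.mul p q) = G.mul (G.inv q) (G.inv p) := by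
  have h1 : G.mul q (G.inv (G.mul p q)) = G.inv p := by
    have h := G.mul_inv_cancel (G.mul p q) (G.inv p)
    rwa [G.inv_mul_cancel p q] at h
  calc G.inv (G.mul p q)
      = G.mul (G.inv q) (G.mul q (G.inv (G.mul p q))) := (G.inv_mul_cancel q _).symm
    _ = G.mul (G.inv q) (G.inv p) := by rw [h1]

lemma inv_one : G.inv G.one = G.one := by
  have h := G.inv_mul_cancel G.one G.one
  rwa [G.one_mul, G.mul_one] at h

end QuasigroupStruct

/-- Transport along an equality of grades, as a linear map. -/
def gcl {Q : Type u} {H : Q → Type w} {k : Type v} [CommSemiring k]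
    [∀ p, AddCommMonoid (H p)] [∀ p, Module k (H p)] {p q : Q} (e : p = q) :
    H p →ₗ[k] H q := by subst e; exact LinearMap.id

/-- A `Q`-graded Hopf quasigroup: a family of coassociative counital coalgebras `H p`
with a (not necessarily associative) graded multiplication, unit and antipode family,
such that the multiplications and the unit are coalgebra maps and the antipode
satisfies the Hopf quasigroup axioms. -/
structure GradedHopfQuasigroup (k : Type v) [CommRing k] {Q : Type u} (G : QuasigroupStruct Q)
    (H : Q → Type w) [∀ p, AddCommGroup (H p)] [∀ p, Module k (H p)]
    [∀ p, Coalgebra k (H p)] where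
  mul : ∀ p q, H p →ₗ[k] H q →ₗ[k] H (G.mul p q)
  one : H G.one
  antipode : ∀ p, H p →ₗ[k] H (G.inv p)
  mul_one' : ∀ (p : Q) (h : H p), gcl (k := k) (G.mul_one p) ((mul p G.one h) one) = h
  one_mul' : ∀ (p : Q) (h : H p), gcl (k := k) (G.one_mul p) ((mul G.one p one) h) = h
  comul_mul : ∀ (p q : Q) (h : H p) (g : H q),
    Coalgebra.comul (R := k) ((mul p q h) g) =
      (TensorProduct.map (TensorProduct.lift (mul p q)) (TensorProduct.lift (mul p q)))
        ((TensorProduct.tensorTensorTensorComm k (H p) (H p) (H q) (H q))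
          (Coalgebra.comul h ⊗ₜ[k] Coalgebra.comul g))
  counit_mul : ∀ (p q : Q) (h : H p) (g : H q),
    Coalgebra.counit (R := k) ((mul p q h) g) =
      Coalgebra.counit (R := k) h * Coalgebra.counit (R := k) g
  comul_one : Coalgebra.comul (R := k) one = one ⊗ₜ[k] one
  counit_one : Coalgebra.counit (R := k) one = 1
  /-- `S (h₁) (h₂ g) = ε(h) g` -/
  antipode_mul_left : ∀ (p q : Q) (h : H p) (g : H q),
    TensorProduct.lift
      (((mul (G.inv p) (G.mul p q)).comp (antipode p)).compl₂ ((mul p q).flip g))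
      (Coalgebra.comul h)
      = gcl (k := k) (G.inv_mul_cancel p q).symm (Coalgebra.counit (R := k) h • g)
  /-- `h₁ (S (h₂) g) = ε(h) g` -/
  antipode_mul_left' : ∀ (p q : Q) (h : H p) (g : H q),
    TensorProduct.lift
      ((mul p (G.mul (G.inv p) q)).compl₂ (((mul (G.inv p) q).flip g).comp (antipode p)))
      (Coalgebra.comul h)
      = gcl (k := k) (G.mul_inv_cancel_left p q).symm (Coalgebra.counit (R := k) h • g)
  /-- `(g S (h₁)) h₂ = ε(h) g` -/
  antipode_mul_right : ∀ (p q : Q) (h : H p) (g : H q),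
    TensorProduct.lift
      ((mul (G.mul q (G.inv p)) p).comp ((mul q (G.inv p) g).comp (antipode p)))
      (Coalgebra.comul h)
      = gcl (k := k) (G.inv_mul_cancel_right p q).symm (Coalgebra.counit (R := k) h • g)
  /-- `(g h₁) S (h₂) = ε(h) g` -/
  antipode_mul_right' : ∀ (p q : Q) (h : H p) (g : H q),
    TensorProduct.lift
      (((mul (G.mul q p) (G.inv p)).comp (mul q p g)).compl₂ (antipode p))
      (Coalgebra.comul h)
      = gcl (k := k) (G.mul_inv_cancel p q).symm (Coalgebra.counit (R := k) h • g)

variable {k : Type v} [Field k] {Q : Type u} {G : QuasigroupStruct Q}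
  {H : Q → Type w} [∀ p, AddCommGroup (H p)] [∀ p, Module k (H p)]
  [∀ p, Coalgebra k (H p)]

variable (A : GradedHopfQuasigroup k G H)

/-- Uncurried graded multiplication. -/
noncomputable def mm (p q : Q) : H p ⊗[k] H q →ₗ[k] H (G.mul p q) :=
  TensorProduct.lift (A.mul p q)

/-- `h ⊗ (g ⊗ f) ↦ (hg)f`. -/
noncomputable def mulLeft (p q r : Q) :
    H p ⊗[k] (H q ⊗[k] H r) →ₗ[k] H (G.mul (G.mul p q) r) :=
  (mm A (G.mul p q) r) ∘ₗ
    (TensorProduct.map (mm A p q) LinearMap.id) ∘ₗ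
      (TensorProduct.assoc k (H p) (H q) (H r)).symm.toLinearMap

/-- `h ⊗ (g ⊗ f) ↦ h(gf)`. -/
noncomputable def mulRight (p q r : Q) :
    H p ⊗[k] (H q ⊗[k] H r) →ₗ[k] H (G.mul p (G.mul q r)) :=
  (mm A p (G.mul q r)) ∘ₗ LinearMap.lTensor (H p) (mm A q r)

/-- `h ⊗ (g ⊗ f) ↦ Δh ⊗ (Δg ⊗ Δf)`, rearranged into
`(h₁ ⊗ (g₁ ⊗ f₁)) ⊗ (h₂ ⊗ (g₂ ⊗ f₂))`. -/
noncomputable def comul3 (p q r : Q) :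
    H p ⊗[k] (H q ⊗[k] H r) →ₗ[k]
      (H p ⊗[k] (H q ⊗[k] H r)) ⊗[k] (H p ⊗[k] (H q ⊗[k] H r)) :=
  (TensorProduct.tensorTensorTensorComm k (H p) (H p)
      (H q ⊗[k] H r) (H q ⊗[k] H r)).toLinearMap ∘ₗ
    (LinearMap.lTensor (H p ⊗[k] H p)
      (TensorProduct.tensorTensorTensorComm k (H q) (H q) (H r) (H r)).toLinearMap) ∘ₗ
      (TensorProduct.map (Coalgebra.comul (R := k))
        (TensorProduct.map (Coalgebra.comul (R := k)) (Coalgebra.comul (R := k))))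

/-- Uncurry a trilinear map. -/
noncomputable def uncurry3 {P : Type w}
    [AddCommGroup P] [Module k P]
    {X Y Z : Type w} [AddCommGroup X] [Module k X] [AddCommGroup Y] [Module k Y]
    [AddCommGroup Z] [Module k Z]
    (f : X →ₗ[k] Y →ₗ[k] Z →ₗ[k] P) : X ⊗[k] (Y ⊗[k] Z) →ₗ[k] P :=
  TensorProduct.lift ((TensorProduct.lift.equiv (RingHom.id k) Y Z P).toLinearMap ∘ₗ f)

/-- The associator `δ(h,g,f) = ((h₁g₁)f₁) S((h₂(g₂f₂)))`, valued in `H e`. -/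
noncomputable def delta0
    (hassoc : ∀ a b c, G.mul (G.mul a b) c = G.mul a (G.mul b c)) (p q r : Q) :
    H p →ₗ[k] H q →ₗ[k] H r →ₗ[k] H G.one :=
  (TensorProduct.lcurry (RingHom.id k) (H q) (H r) (H G.one)) ∘ₗ
    TensorProduct.curry
      ((gcl (k := k) (show G.mul (G.mul (G.mul p q) r)
            (G.inv (G.mul p (G.mul q r))) = G.one by
          rw [hassoc p q r]; exact G.mul_inv_self _)) ∘ₗ
        (mm A (G.mul (G.mul p q) r) (G.inv (G.mul p (G.mul q r)))) ∘ₗ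
          (TensorProduct.map (mulLeft A p q r)
            ((A.antipode (G.mul p (G.mul q r))) ∘ₗ mulRight A p q r)) ∘ₗ
            comul3 p q r)

/-- `δ'` is an associator for `H` :
`(hg)f = δ'(h₁,g₁,f₁) (h₂(g₂f₂))`. -/
noncomputable def IsAssociator
    (hassoc : ∀ a b c, G.mul (G.mul a b) c = G.mul a (G.mul b c))
    (δ' : ∀ p q r : Q, H p →ₗ[k] H q →ₗ[k] H r →ₗ[k] H G.one) : Prop :=
  ∀ (p q r : Q) (x : H p ⊗[k] (H q ⊗[k] H r)),
    mulLeft A p q r x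
      = gcl (k := k) (show G.mul G.one (G.mul p (G.mul q r))
            = G.mul (G.mul p q) r by rw [G.one_mul, hassoc p q r])
          ((mm A G.one (G.mul p (G.mul q r)))
            ((TensorProduct.map (uncurry3 (δ' p q r)) (mulRight A p q r))
              (comul3 p q r x)))


set_option linter.unusedSectionVars false

section Aux
variable {p q : Q}

lemma gcl_id (e : p = p) : gcl (k := k) (H := H) e = LinearMap.id := rfl

lemma gcl_gcl {p q r : Q} (e : p = q) (e' : q = r) :
    gcl (k := k) (H := H) e' ∘ₗ gcl (k := k) (H := H) e = gcl (k := k) (H := H) (e.trans e') := by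
  subst e; subst e'; rfl

lemma gcl_apply_gcl {p q r : Q} (e : p = q) (e' : q = r) (x : H p) :
    gcl (k := k) (H := H) e' (gcl (k := k) (H := H) e x) = gcl (k := k) (H := H) (e.trans e') x := by
  subst e; subst e'; rfl

lemma mm_gcl_left {p p' q : Q} (e : p = p') :
    mm A p' q ∘ₗ TensorProduct.map (gcl (k := k) (H := H) e) LinearMap.id
      = gcl (k := k) (H := H) (congrArg (fun x => G.mul x q) e) ∘ₗ mm A p q := by
  subst e; simp [gcl_id, TensorProduct.map_id]

lemma mm_gcl_right {p q q' : Q} (e : q = q') :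
    mm A p q' ∘ₗ TensorProduct.map LinearMap.id (gcl (k := k) (H := H) e)
      = gcl (k := k) (H := H) (congrArg (fun x => G.mul p x) e) ∘ₗ mm A p q := by
  subst e; simp [gcl_id, TensorProduct.map_id]

end Aux

section CoalgGen
variable {M N : Type w} [AddCommGroup M] [Module k M] [AddCommGroup N] [Module k N]

/-- Comultiplication on a tensor product, from raw comultiplication data. -/
noncomputable def d2 (cM : M →ₗ[k] M ⊗[k] M) (cN : N →ₗ[k] N ⊗[k] N) :
    M ⊗[k] N →ₗ[k] (M ⊗[k] N) ⊗[k] (M ⊗[k] N) :=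
  (TensorProduct.tensorTensorTensorComm k M M N N).toLinearMap ∘ₗ TensorProduct.map cM cN

/-- Counit on a tensor product, from raw counit data. -/
noncomputable def e2 (eM : M →ₗ[k] k) (eN : N →ₗ[k] k) : M ⊗[k] N →ₗ[k] k :=
  LinearMap.mul' k k ∘ₗ TensorProduct.map eM eN

lemma d2_tmul (cM : M →ₗ[k] M ⊗[k] M) (cN : N →ₗ[k] N ⊗[k] N) (x : M) (y : N) :
    d2 cM cN (x ⊗ₜ[k] y)
      = TensorProduct.tensorTensorTensorComm k M M N N (cM x ⊗ₜ[k] cN y) := by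
  simp [d2]

lemma d2_coassoc (cM : M →ₗ[k] M ⊗[k] M) (cN : N →ₗ[k] N ⊗[k] N)
    (hM : LinearMap.rTensor M cM ∘ₗ cM
      = (TensorProduct.assoc k M M M).symm.toLinearMap ∘ₗ LinearMap.lTensor M cM ∘ₗ cM)
    (hN : LinearMap.rTensor N cN ∘ₗ cN
      = (TensorProduct.assoc k N N N).symm.toLinearMap ∘ₗ LinearMap.lTensor N cN ∘ₗ cN) :
    LinearMap.rTensor (M ⊗[k] N) (d2 cM cN) ∘ₗ d2 cM cN
      = (TensorProduct.assoc k (M ⊗[k] N) (M ⊗[k] N) (M ⊗[k] N)).symm.toLinearMap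
          ∘ₗ LinearMap.lTensor (M ⊗[k] N) (d2 cM cN) ∘ₗ d2 cM cN := by
  have S1 : LinearMap.rTensor (M ⊗[k] N) (d2 cM cN)
        ∘ₗ (TensorProduct.tensorTensorTensorComm k M M N N).toLinearMap
      = LinearMap.rTensor (M ⊗[k] N)
            (TensorProduct.tensorTensorTensorComm k M M N N).toLinearMap
          ∘ₗ (TensorProduct.tensorTensorTensorComm k (M ⊗[k] M) M (N ⊗[k] N) N).toLinearMap
          ∘ₗ TensorProduct.map (LinearMap.rTensor M cM) (LinearMap.rTensor N cN) := by
    ext m1 m2 n1 n2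
    simp [d2]
  have S2 : LinearMap.lTensor (M ⊗[k] N) (d2 cM cN)
        ∘ₗ (TensorProduct.tensorTensorTensorComm k M M N N).toLinearMap
      = LinearMap.lTensor (M ⊗[k] N)
            (TensorProduct.tensorTensorTensorComm k M M N N).toLinearMap
          ∘ₗ (TensorProduct.tensorTensorTensorComm k M (M ⊗[k] M) N (N ⊗[k] N)).toLinearMap
          ∘ₗ TensorProduct.map (LinearMap.lTensor M cM) (LinearMap.lTensor N cN) := by
    ext m1 m2 n1 n2
    simp [d2]
  have S3 : LinearMap.rTensor (M ⊗[k] N)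
          (TensorProduct.tensorTensorTensorComm k M M N N).toLinearMap
        ∘ₗ (TensorProduct.tensorTensorTensorComm k (M ⊗[k] M) M (N ⊗[k] N) N).toLinearMap
        ∘ₗ TensorProduct.map (TensorProduct.assoc k M M M).symm.toLinearMap
            (TensorProduct.assoc k N N N).symm.toLinearMap
      = (TensorProduct.assoc k (M ⊗[k] N) (M ⊗[k] N) (M ⊗[k] N)).symm.toLinearMap
        ∘ₗ LinearMap.lTensor (M ⊗[k] N)
            (TensorProduct.tensorTensorTensorComm k M M N N).toLinearMap
        ∘ₗ (TensorProduct.tensorTensorTensorComm k M (M ⊗[k] M) N (N ⊗[k] N)).toLinearMap := by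
    ext m1 m2 m3 n1 n2 n3
    simp
  apply LinearMap.ext; intro x
  have h1 := LinearMap.congr_fun S1 (TensorProduct.map cM cN x)
  have h2 := LinearMap.congr_fun S2 (TensorProduct.map cM cN x)
  have h3 := LinearMap.congr_fun S3
    (TensorProduct.map (LinearMap.lTensor M cM ∘ₗ cM) (LinearMap.lTensor N cN ∘ₗ cN) x)
  have hmapr : TensorProduct.map (LinearMap.rTensor M cM) (LinearMap.rTensor N cN)
      (TensorProduct.map cM cN x)
      = TensorProduct.map (LinearMap.rTensor M cM ∘ₗ cM) (LinearMap.rTensor N cN ∘ₗ cN) x := by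
    rw [TensorProduct.map_comp]; rfl
  have hmapl : TensorProduct.map (LinearMap.lTensor M cM) (LinearMap.lTensor N cN)
      (TensorProduct.map cM cN x)
      = TensorProduct.map (LinearMap.lTensor M cM ∘ₗ cM) (LinearMap.lTensor N cN ∘ₗ cN) x := by
    rw [TensorProduct.map_comp]; rfl
  have hmapa : TensorProduct.map
        ((TensorProduct.assoc k M M M).symm.toLinearMap ∘ₗ (LinearMap.lTensor M cM ∘ₗ cM))
        ((TensorProduct.assoc k N N N).symm.toLinearMap ∘ₗ (LinearMap.lTensor N cN ∘ₗ cN)) x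
      = TensorProduct.map (TensorProduct.assoc k M M M).symm.toLinearMap
          (TensorProduct.assoc k N N N).symm.toLinearMap
          (TensorProduct.map (LinearMap.lTensor M cM ∘ₗ cM)
            (LinearMap.lTensor N cN ∘ₗ cN) x) := by
    rw [TensorProduct.map_comp]; rfl
  simp only [LinearMap.comp_apply, LinearEquiv.coe_coe] at h1 h2 h3 ⊢
  simp only [d2, LinearMap.comp_apply, LinearEquiv.coe_coe] at *
  rw [h1, hmapr, hM, hN, ← LinearMap.comp_assoc, ← LinearMap.comp_assoc]
  simp only [LinearMap.comp_assoc]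
  rw [hmapa, h3, h2, hmapl]

lemma d2_rcounit (cM : M →ₗ[k] M ⊗[k] M) (cN : N →ₗ[k] N ⊗[k] N)
    (eM : M →ₗ[k] k) (eN : N →ₗ[k] k)
    (hM : (TensorProduct.rid k M).toLinearMap ∘ₗ LinearMap.lTensor M eM ∘ₗ cM = LinearMap.id)
    (hN : (TensorProduct.rid k N).toLinearMap ∘ₗ LinearMap.lTensor N eN ∘ₗ cN = LinearMap.id) :
    (TensorProduct.rid k (M ⊗[k] N)).toLinearMap
        ∘ₗ LinearMap.lTensor (M ⊗[k] N) (e2 eM eN) ∘ₗ d2 cM cN = LinearMap.id := by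
  have S5 : (TensorProduct.rid k (M ⊗[k] N)).toLinearMap
        ∘ₗ LinearMap.lTensor (M ⊗[k] N) (e2 eM eN)
        ∘ₗ (TensorProduct.tensorTensorTensorComm k M M N N).toLinearMap
      = TensorProduct.map
          ((TensorProduct.rid k M).toLinearMap ∘ₗ LinearMap.lTensor M eM)
          ((TensorProduct.rid k N).toLinearMap ∘ₗ LinearMap.lTensor N eN) := by
    ext m1 m2 n1 n2
    simp [e2, TensorProduct.smul_tmul', TensorProduct.tmul_smul, smul_smul, mul_comm]
  calc (TensorProduct.rid k (M ⊗[k] N)).toLinearMap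
        ∘ₗ LinearMap.lTensor (M ⊗[k] N) (e2 eM eN) ∘ₗ d2 cM cN
      = ((TensorProduct.rid k (M ⊗[k] N)).toLinearMap
          ∘ₗ LinearMap.lTensor (M ⊗[k] N) (e2 eM eN)
          ∘ₗ (TensorProduct.tensorTensorTensorComm k M M N N).toLinearMap)
          ∘ₗ TensorProduct.map cM cN := by
        simp only [d2, LinearMap.comp_assoc]
    _ = TensorProduct.map
          ((TensorProduct.rid k M).toLinearMap ∘ₗ LinearMap.lTensor M eM ∘ₗ cM)
          ((TensorProduct.rid k N).toLinearMap ∘ₗ LinearMap.lTensor N eN ∘ₗ cN) := by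
        rw [S5, ← TensorProduct.map_comp]; simp only [LinearMap.comp_assoc]
    _ = LinearMap.id := by rw [hM, hN, TensorProduct.map_id]

end CoalgGen

section Bridge
variable (M : Type w) [AddCommGroup M] [Module k M] [Coalgebra k M]

lemma coassoc_symm_form :
    LinearMap.rTensor M (Coalgebra.comul (R := k)) ∘ₗ Coalgebra.comul
      = (TensorProduct.assoc k M M M).symm.toLinearMap
          ∘ₗ LinearMap.lTensor M (Coalgebra.comul) ∘ₗ Coalgebra.comul := by
  rw [← Coalgebra.coassoc]
  apply LinearMap.ext; intro x
  simp

lemma rcounit_form :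
    (TensorProduct.rid k M).toLinearMap
        ∘ₗ LinearMap.lTensor M (Coalgebra.counit (R := k)) ∘ₗ Coalgebra.comul
      = LinearMap.id := by
  apply LinearMap.ext; intro x
  have h := LinearMap.congr_fun (Coalgebra.lTensor_counit_comp_comul (R := k) (A := M)) x
  simp only [LinearMap.comp_apply] at h ⊢
  rw [h]
  simp

end Bridge

section Inst
variable (p q r : Q)

lemma comul3_eq : comul3 (k := k) (H := H) p q r
    = d2 (Coalgebra.comul (R := k)) (d2 (Coalgebra.comul (R := k)) Coalgebra.comul) := by
  ext x y z
  simp [comul3, d2]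

/-- triple counit -/
noncomputable def e3 : (H p ⊗[k] (H q ⊗[k] H r)) →ₗ[k] k :=
  e2 (Coalgebra.counit (R := k)) (e2 (Coalgebra.counit (R := k)) Coalgebra.counit)

lemma comul3_coassoc :
    LinearMap.rTensor _ (comul3 (k := k) (H := H) p q r) ∘ₗ comul3 p q r
      = (TensorProduct.assoc k _ _ _).symm.toLinearMap
          ∘ₗ LinearMap.lTensor _ (comul3 (k := k) (H := H) p q r) ∘ₗ comul3 p q r := by
  rw [comul3_eq]
  exact d2_coassoc _ _ (coassoc_symm_form _)
    (d2_coassoc _ _ (coassoc_symm_form _) (coassoc_symm_form _))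

lemma comul3_rcounit :
    (TensorProduct.rid k _).toLinearMap
        ∘ₗ LinearMap.lTensor _ (e3 p q r) ∘ₗ comul3 (k := k) (H := H) p q r
      = LinearMap.id := by
  rw [comul3_eq]
  exact d2_rcounit _ _ _ _ (rcounit_form _)
    (d2_rcounit _ _ _ _ (rcounit_form _) (rcounit_form _))

lemma comul_mulRight :
    Coalgebra.comul (R := k) ∘ₗ mulRight A p q r
      = TensorProduct.map (mulRight A p q r) (mulRight A p q r) ∘ₗ comul3 p q r := by
  have T1 : TensorProduct.map (mm A p (G.mul q r)) (mm A p (G.mul q r))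
        ∘ₗ (TensorProduct.tensorTensorTensorComm k (H p) (H p)
              (H (G.mul q r)) (H (G.mul q r))).toLinearMap
        ∘ₗ LinearMap.lTensor (H p ⊗[k] H p)
            (TensorProduct.map (mm A q r) (mm A q r))
      = TensorProduct.map (mulRight A p q r) (mulRight A p q r)
        ∘ₗ (TensorProduct.tensorTensorTensorComm k (H p) (H p)
              (H q ⊗[k] H r) (H q ⊗[k] H r)).toLinearMap := by
    ext a1 a2 b1 b2
    simp [mulRight, mm]
  ext x y z
  simp only [mulRight, mm, comul3, LinearMap.comp_apply, AlgebraTensorModule.curry_apply,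
    TensorProduct.curry_apply, LinearMap.coe_restrictScalars, LinearMap.lTensor_tmul,
    TensorProduct.map_tmul, LinearEquiv.coe_coe, TensorProduct.lift.tmul]
  rw [A.comul_mul p (G.mul q r) x (A.mul q r y z), A.comul_mul q r y z]
  have h3 := LinearMap.congr_fun T1
    (Coalgebra.comul (R := k) x ⊗ₜ[k]
      (TensorProduct.tensorTensorTensorComm k (H q) (H q) (H r) (H r))
        (Coalgebra.comul y ⊗ₜ[k] Coalgebra.comul z))
  simp only [mulRight, mm, LinearMap.comp_apply, LinearEquiv.coe_coe,
    LinearMap.lTensor_tmul, TensorProduct.map_tmul] at h3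
  exact h3

lemma counit_mulRight :
    Coalgebra.counit (R := k) ∘ₗ mulRight A p q r = e3 p q r := by
  ext x y z
  simp [mulRight, mm, e3, e2, A.counit_mul]

end Inst

section Antip
variable (s u : Q)

/-- `g ⊗ h ↦ ε(h) • g`. -/
noncomputable def epsR : H u ⊗[k] H s →ₗ[k] H u :=
  (TensorProduct.rid k (H u)).toLinearMap
    ∘ₗ LinearMap.lTensor (H u) (Coalgebra.counit (R := k))

lemma epsR_tmul (g : H u) (h : H s) :
    epsR (k := k) s u (g ⊗ₜ[k] h) = Coalgebra.counit (R := k) h • g := by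
  simp [epsR]

/-- Map-level form of `antipode_mul_right` : `(g S(h₁)) h₂ = ε(h) g`. -/
lemma antipodeR :
    mm A (G.mul u (G.inv s)) s
        ∘ₗ TensorProduct.map
            (mm A u (G.inv s) ∘ₗ LinearMap.lTensor (H u) (A.antipode s)) LinearMap.id
        ∘ₗ (TensorProduct.assoc k (H u) (H s) (H s)).symm.toLinearMap
        ∘ₗ LinearMap.lTensor (H u) (Coalgebra.comul (R := k))
      = gcl (k := k) (G.inv_mul_cancel_right s u).symm ∘ₗ epsR s u := by
  apply TensorProduct.ext'
  intro g h
  have key : (mm A (G.mul u (G.inv s)) s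
        ∘ₗ TensorProduct.map
            (mm A u (G.inv s) ∘ₗ LinearMap.lTensor (H u) (A.antipode s)) LinearMap.id
        ∘ₗ (TensorProduct.assoc k (H u) (H s) (H s)).symm.toLinearMap)
        ∘ₗ TensorProduct.mk k (H u) (H s ⊗[k] H s) g
      = TensorProduct.lift
          ((A.mul (G.mul u (G.inv s)) s).comp ((A.mul u (G.inv s) g).comp
            (A.antipode s))) := by
    apply TensorProduct.ext'
    intro h1 h2
    simp [mm]
  have lhs_eq := LinearMap.congr_fun key (Coalgebra.comul (R := k) h)
  simp only [LinearMap.comp_apply, TensorProduct.mk_apply, LinearEquiv.coe_coe] at lhs_eq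
  simp only [LinearMap.comp_apply, LinearMap.lTensor_tmul, LinearEquiv.coe_coe]
  rw [lhs_eq, A.antipode_mul_right s u h g, epsR_tmul]

/-- Map-level form of `antipode_mul_right'` : `(g h₁) S(h₂) = ε(h) g`. -/
lemma antipodeR' :
    mm A (G.mul u s) (G.inv s)
        ∘ₗ TensorProduct.map (mm A u s) (A.antipode s)
        ∘ₗ (TensorProduct.assoc k (H u) (H s) (H s)).symm.toLinearMap
        ∘ₗ LinearMap.lTensor (H u) (Coalgebra.comul (R := k))
      = gcl (k := k) (G.mul_inv_cancel s u).symm ∘ₗ epsR s u := by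
  apply TensorProduct.ext'
  intro g h
  have key : (mm A (G.mul u s) (G.inv s)
        ∘ₗ TensorProduct.map (mm A u s) (A.antipode s)
        ∘ₗ (TensorProduct.assoc k (H u) (H s) (H s)).symm.toLinearMap)
        ∘ₗ TensorProduct.mk k (H u) (H s ⊗[k] H s) g
      = TensorProduct.lift
          (((A.mul (G.mul u s) (G.inv s)).comp (A.mul u s g)).compl₂ (A.antipode s)) := by
    apply TensorProduct.ext'
    intro h1 h2
    simp [mm]
  have lhs_eq := LinearMap.congr_fun key (Coalgebra.comul (R := k) h)
  simp only [LinearMap.comp_apply, TensorProduct.mk_apply, LinearEquiv.coe_coe] at lhs_eq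
  simp only [LinearMap.comp_apply, LinearMap.lTensor_tmul, LinearEquiv.coe_coe]
  rw [lhs_eq, A.antipode_mul_right' s u h g, epsR_tmul]

end Antip

section Main
variable (hassoc : ∀ a b c, G.mul (G.mul a b) c = G.mul a (G.mul b c)) (p q r : Q)

lemma uncurry3_apply {P : Type w} [AddCommGroup P] [Module k P]
    {X Y Z : Type w} [AddCommGroup X] [Module k X] [AddCommGroup Y] [Module k Y]
    [AddCommGroup Z] [Module k Z]
    (f : X →ₗ[k] Y →ₗ[k] Z →ₗ[k] P) (x : X) (y : Y) (z : Z) :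
    uncurry3 f (x ⊗ₜ[k] (y ⊗ₜ[k] z)) = f x y z := by
  simp [uncurry3]

lemma uncurry3_delta0 :
    uncurry3 (delta0 A hassoc p q r)
      = (gcl (k := k) (show G.mul (G.mul (G.mul p q) r)
            (G.inv (G.mul p (G.mul q r))) = G.one by
          rw [hassoc p q r]; exact G.mul_inv_self _)) ∘ₗ
        (mm A (G.mul (G.mul p q) r) (G.inv (G.mul p (G.mul q r)))) ∘ₗ
          (TensorProduct.map (mulLeft A p q r)
            ((A.antipode (G.mul p (G.mul q r))) ∘ₗ mulRight A p q r)) ∘ₗ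
            comul3 p q r := by
  ext x y z
  simp only [AlgebraTensorModule.curry_apply, TensorProduct.curry_apply,
    LinearMap.coe_restrictScalars, LinearMap.comp_apply]
  rw [uncurry3_apply]
  simp [delta0]

lemma existence_map :
    mulLeft A p q r
      = gcl (k := k) (show G.mul G.one (G.mul p (G.mul q r))
            = G.mul (G.mul p q) r by rw [G.one_mul, hassoc p q r])
        ∘ₗ mm A G.one (G.mul p (G.mul q r))
        ∘ₗ TensorProduct.map (uncurry3 (delta0 A hassoc p q r)) (mulRight A p q r)
        ∘ₗ comul3 p q r := by
  set s := G.mul p (G.mul q r) with hs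
  set t := G.mul (G.mul p q) r with ht
  set L := mulLeft A p q r with hL
  set M := mulRight A p q r with hM
  set C := comul3 (k := k) (H := H) p q r with hC
  set S := A.antipode s with hS
  set e₂ : G.mul t (G.inv s) = G.one := (show G.mul (G.mul (G.mul p q) r)
            (G.inv (G.mul p (G.mul q r))) = G.one by
          rw [hassoc p q r]; exact G.mul_inv_self _) with he₂
  set K : (H p ⊗[k] (H q ⊗[k] H r)) ⊗[k] (H p ⊗[k] (H q ⊗[k] H r)) →ₗ[k]
      H (G.mul t (G.inv s)) :=
    mm A t (G.inv s) ∘ₗ TensorProduct.map L (S ∘ₗ M) with hK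
  have hD : uncurry3 (delta0 A hassoc p q r) = gcl (k := k) e₂ ∘ₗ (K ∘ₗ C) := by
    rw [uncurry3_delta0 A hassoc p q r]
    simp only [hK, LinearMap.comp_assoc]
    rfl
  -- structural lemma T2
  have T2 : TensorProduct.map K M
        ∘ₗ (TensorProduct.assoc k (H p ⊗[k] (H q ⊗[k] H r))
            (H p ⊗[k] (H q ⊗[k] H r)) (H p ⊗[k] (H q ⊗[k] H r))).symm.toLinearMap
      = TensorProduct.map (mm A t (G.inv s) ∘ₗ LinearMap.lTensor (H t) S) LinearMap.id
        ∘ₗ (TensorProduct.assoc k (H t) (H s) (H s)).symm.toLinearMap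
        ∘ₗ TensorProduct.map L (TensorProduct.map M M) := by
    ext a b c
    simp [hK]
  have hE : TensorProduct.map L (TensorProduct.map M M)
        ∘ₗ LinearMap.lTensor (H p ⊗[k] (H q ⊗[k] H r)) C
      = LinearMap.lTensor (H t) (Coalgebra.comul (R := k))
        ∘ₗ TensorProduct.map L M := by
    apply TensorProduct.ext'
    intro a b
    simp only [LinearMap.comp_apply, LinearMap.lTensor_tmul, TensorProduct.map_tmul]
    rw [hM, hC, ← LinearMap.comp_apply, ← comul_mulRight]
    rfl
  have hF : epsR (k := k) s t ∘ₗ TensorProduct.map L M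
      = L ∘ₗ (TensorProduct.rid k (H p ⊗[k] (H q ⊗[k] H r))).toLinearMap
          ∘ₗ LinearMap.lTensor (H p ⊗[k] (H q ⊗[k] H r)) (e3 p q r) := by
    apply TensorProduct.ext'
    intro a b
    have hcb : Coalgebra.counit (R := k) (M b) = e3 p q r b :=
      LinearMap.congr_fun (counit_mulRight A p q r) b
    simp only [LinearMap.comp_apply, LinearMap.lTensor_tmul, TensorProduct.map_tmul,
      epsR_tmul, LinearEquiv.coe_coe, TensorProduct.rid_tmul, map_smul]
    rw [hcb]
  apply LinearMap.ext; intro x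
  simp only [LinearMap.comp_apply, LinearEquiv.coe_coe]
  rw [hD]
  have step1 : TensorProduct.map (gcl (k := k) e₂ ∘ₗ K ∘ₗ C) M
      = TensorProduct.map (gcl (k := k) e₂) LinearMap.id ∘ₗ TensorProduct.map K M
          ∘ₗ TensorProduct.map C LinearMap.id := by
    rw [← TensorProduct.map_comp, ← TensorProduct.map_comp]
    simp only [LinearMap.comp_id, LinearMap.id_comp]
  rw [step1]
  simp only [LinearMap.comp_apply]
  have B := LinearMap.congr_fun (mm_gcl_left A (q := s) e₂)
    (TensorProduct.map K M (TensorProduct.map C LinearMap.id (C x)))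
  simp only [LinearMap.comp_apply] at B
  rw [B]
  have co : TensorProduct.map C LinearMap.id (C x)
      = (TensorProduct.assoc k (H p ⊗[k] (H q ⊗[k] H r)) (H p ⊗[k] (H q ⊗[k] H r))
          (H p ⊗[k] (H q ⊗[k] H r))).symm
          (LinearMap.lTensor (H p ⊗[k] (H q ⊗[k] H r)) C (C x)) := by
    have h := LinearMap.congr_fun (comul3_coassoc p q r) x
    simp only [LinearMap.comp_apply, LinearEquiv.coe_coe] at h
    have : LinearMap.rTensor (H p ⊗[k] (H q ⊗[k] H r)) (comul3 (k := k) (H := H) p q r)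
        = TensorProduct.map (comul3 (k := k) (H := H) p q r) LinearMap.id := rfl
    rw [this] at h
    rw [hC]
    exact h
  rw [co]
  have T2' := LinearMap.congr_fun T2
    (LinearMap.lTensor (H p ⊗[k] (H q ⊗[k] H r)) C (C x))
  simp only [LinearMap.comp_apply, LinearEquiv.coe_coe] at T2'
  rw [T2']
  have hE' := LinearMap.congr_fun hE (C x)
  simp only [LinearMap.comp_apply] at hE'
  rw [hE']
  rw [hS]
  have AR := LinearMap.congr_fun (antipodeR A s t) (TensorProduct.map L M (C x))
  simp only [LinearMap.comp_apply, LinearEquiv.coe_coe] at AR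
  rw [AR]
  have hF' := LinearMap.congr_fun hF (C x)
  simp only [LinearMap.comp_apply, LinearEquiv.coe_coe] at hF'
  rw [hF']
  have hcu := LinearMap.congr_fun (comul3_rcounit p q r) x
  simp only [LinearMap.comp_apply, LinearEquiv.coe_coe, LinearMap.id_apply] at hcu
  rw [hC, hcu]
  rw [gcl_apply_gcl, gcl_apply_gcl, gcl_id, LinearMap.id_apply]


lemma uniqueness_map (δ' : ∀ p q r : Q, H p →ₗ[k] H q →ₗ[k] H r →ₗ[k] H G.one)
    (hδ : mulLeft A p q r
      = gcl (k := k) (show G.mul G.one (G.mul p (G.mul q r))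
            = G.mul (G.mul p q) r by rw [G.one_mul, hassoc p q r])
        ∘ₗ mm A G.one (G.mul p (G.mul q r))
        ∘ₗ TensorProduct.map (uncurry3 (δ' p q r)) (mulRight A p q r)
        ∘ₗ comul3 p q r) :
    uncurry3 (δ' p q r) = uncurry3 (delta0 A hassoc p q r) := by
  set s := G.mul p (G.mul q r) with hs
  set t := G.mul (G.mul p q) r with ht
  set L := mulLeft A p q r with hL
  set M := mulRight A p q r with hM
  set C := comul3 (k := k) (H := H) p q r with hC
  set D' := uncurry3 (δ' p q r) with hD'
  set e₁ : G.mul G.one s = t := (show G.mul G.one (G.mul p (G.mul q r))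
            = G.mul (G.mul p q) r by rw [G.one_mul, hassoc p q r]) with he₁
  set e₂ : G.mul t (G.inv s) = G.one := (show G.mul (G.mul (G.mul p q) r)
            (G.inv (G.mul p (G.mul q r))) = G.one by
          rw [hassoc p q r]; exact G.mul_inv_self _) with he₂
  rw [uncurry3_delta0 A hassoc p q r]
  have T2u : TensorProduct.map (mm A G.one s ∘ₗ TensorProduct.map D' M)
          (A.antipode s ∘ₗ M)
        ∘ₗ (TensorProduct.assoc k (H p ⊗[k] (H q ⊗[k] H r))
            (H p ⊗[k] (H q ⊗[k] H r)) (H p ⊗[k] (H q ⊗[k] H r))).symm.toLinearMap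
      = TensorProduct.map (mm A G.one s) (A.antipode s)
        ∘ₗ (TensorProduct.assoc k (H G.one) (H s) (H s)).symm.toLinearMap
        ∘ₗ TensorProduct.map D' (TensorProduct.map M M) := by
    ext a b c
    simp
  have hE : TensorProduct.map D' (TensorProduct.map M M)
        ∘ₗ LinearMap.lTensor (H p ⊗[k] (H q ⊗[k] H r)) C
      = LinearMap.lTensor (H G.one) (Coalgebra.comul (R := k))
        ∘ₗ TensorProduct.map D' M := by
    apply TensorProduct.ext'
    intro a b
    simp only [LinearMap.comp_apply, LinearMap.lTensor_tmul, TensorProduct.map_tmul]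
    rw [hM, hC, ← LinearMap.comp_apply, ← comul_mulRight]
    rfl
  have hF : epsR (k := k) s G.one ∘ₗ TensorProduct.map D' M
      = D' ∘ₗ (TensorProduct.rid k (H p ⊗[k] (H q ⊗[k] H r))).toLinearMap
          ∘ₗ LinearMap.lTensor (H p ⊗[k] (H q ⊗[k] H r)) (e3 p q r) := by
    apply TensorProduct.ext'
    intro a b
    have hcb : Coalgebra.counit (R := k) (M b) = e3 p q r b :=
      LinearMap.congr_fun (counit_mulRight A p q r) b
    simp only [LinearMap.comp_apply, LinearMap.lTensor_tmul, TensorProduct.map_tmul,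
      epsR_tmul, LinearEquiv.coe_coe, TensorProduct.rid_tmul, map_smul]
    rw [hcb]
  apply LinearMap.ext; intro x
  symm
  simp only [LinearMap.comp_apply, LinearEquiv.coe_coe]
  have step1 : TensorProduct.map L (A.antipode s ∘ₗ M)
      = TensorProduct.map (gcl (k := k) e₁) LinearMap.id
        ∘ₗ TensorProduct.map (mm A G.one s ∘ₗ TensorProduct.map D' M) (A.antipode s ∘ₗ M)
        ∘ₗ TensorProduct.map C LinearMap.id := by
    rw [hδ]
    rw [← TensorProduct.map_comp, ← TensorProduct.map_comp]
    simp only [LinearMap.comp_id, LinearMap.id_comp, LinearMap.comp_assoc]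
    rfl
  rw [← hL, ← hM, ← hC, step1]
  simp only [LinearMap.comp_apply]
  have B := LinearMap.congr_fun (mm_gcl_left A (q := G.inv s) e₁)
    (TensorProduct.map (mm A G.one s ∘ₗ TensorProduct.map D' M) (A.antipode s ∘ₗ M)
      (TensorProduct.map C LinearMap.id (C x)))
  simp only [LinearMap.comp_apply] at B
  rw [B]
  have co : TensorProduct.map C LinearMap.id (C x)
      = (TensorProduct.assoc k (H p ⊗[k] (H q ⊗[k] H r)) (H p ⊗[k] (H q ⊗[k] H r))
          (H p ⊗[k] (H q ⊗[k] H r))).symm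
          (LinearMap.lTensor (H p ⊗[k] (H q ⊗[k] H r)) C (C x)) := by
    have h := LinearMap.congr_fun (comul3_coassoc p q r) x
    simp only [LinearMap.comp_apply, LinearEquiv.coe_coe] at h
    have hr : LinearMap.rTensor (H p ⊗[k] (H q ⊗[k] H r)) (comul3 (k := k) (H := H) p q r)
        = TensorProduct.map (comul3 (k := k) (H := H) p q r) LinearMap.id := rfl
    rw [hr] at h
    rw [hC]
    exact h
  rw [co]
  have T2u' := LinearMap.congr_fun T2u
    (LinearMap.lTensor (H p ⊗[k] (H q ⊗[k] H r)) C (C x))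
  simp only [LinearMap.comp_apply, LinearEquiv.coe_coe] at T2u'
  rw [T2u']
  have hE' := LinearMap.congr_fun hE (C x)
  simp only [LinearMap.comp_apply] at hE'
  rw [hE']
  have AR := LinearMap.congr_fun (antipodeR' A s G.one)
    (TensorProduct.map D' M (C x))
  simp only [LinearMap.comp_apply, LinearEquiv.coe_coe] at AR
  rw [AR]
  have hF' := LinearMap.congr_fun hF (C x)
  simp only [LinearMap.comp_apply, LinearEquiv.coe_coe] at hF'
  rw [hF']
  have hcu := LinearMap.congr_fun (comul3_rcounit p q r) x
  simp only [LinearMap.comp_apply, LinearEquiv.coe_coe, LinearMap.id_apply] at hcu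
  rw [hC, hcu]
  rw [gcl_apply_gcl, gcl_apply_gcl, gcl_id, LinearMap.id_apply]

end Main

/-- The associator exists and is uniquely determined by the formula `delta0`. -/
theorem gradedHopfQuasigroup_associator_exists_unique
    (hassoc : ∀ a b c, G.mul (G.mul a b) c = G.mul a (G.mul b c)) :
    IsAssociator A hassoc (delta0 A hassoc) ∧
    ∀ δ' : ∀ p q r : Q, H p →ₗ[k] H q →ₗ[k] H r →ₗ[k] H G.one,
      IsAssociator A hassoc δ' → ∀ p q r, δ' p q r = delta0 A hassoc p q r := by
  constructor
  · unfold IsAssociator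
    intro p q r x
    have h := LinearMap.congr_fun (existence_map A hassoc p q r) x
    simpa only [LinearMap.comp_apply] using h
  · intro δ' hδ p q r
    unfold IsAssociator at hδ
    have hm : mulLeft A p q r
        = gcl (k := k) (show G.mul G.one (G.mul p (G.mul q r))
              = G.mul (G.mul p q) r by rw [G.one_mul, hassoc p q r])
          ∘ₗ mm A G.one (G.mul p (G.mul q r))
          ∘ₗ TensorProduct.map (uncurry3 (δ' p q r)) (mulRight A p q r)
          ∘ₗ comul3 p q r := by
      apply LinearMap.ext; intro x
      have h := hδ p q r x
      simpa only [LinearMap.comp_apply] using h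
    have hu := uniqueness_map A hassoc p q r δ' hm
    apply LinearMap.ext; intro a
    apply LinearMap.ext; intro b
    apply LinearMap.ext; intro c
    have h2 := LinearMap.congr_fun hu (a ⊗ₜ[k] (b ⊗ₜ[k] c))
    rw [uncurry3_apply, uncurry3_apply] at h2
    exact h2
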